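/- Let I and J be intervals of ℝ with I ∩ J nonempty, and let K = I ∪ J (assumed to be an interval). If g is a control function of f on I and g is a control function of f on J, then g is a control function of f on K. -/
import Mathlib


/-- `f` is a difference-quotient control function of `F` on the set `S`. -/
def IsControl (f F : ℝ → ℝ) (S : Set ℝ) : Prop :=
  ∀ u ∈ S, ∀ v ∈ S, u < v →
    ∃ p ∈ Set.Icc u v ∩ S, ∃ q ∈ Set.Icc u v ∩ S,
      f p ≤ (F v - F u) / (v - u) ∧ (F v - F u) / (v - u) ≤ f q

/-- The full difference quotient lies between the two partial ones. -/
lemma quot_split (F : ℝ → ℝ) {u w v : ℝ} (h1 : u < w) (h2 : w < v) :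
    ((F w - F u) / (w - u) ≤ (F v - F u) / (v - u) ∨
      (F v - F w) / (v - w) ≤ (F v - F u) / (v - u)) ∧
    ((F v - F u) / (v - u) ≤ (F w - F u) / (w - u) ∨
      (F v - F u) / (v - u) ≤ (F v - F w) / (v - w)) := by
  have ha : (0:ℝ) < w - u := by linarith
  have hb : (0:ℝ) < v - w := by linarith
  have hc : (0:ℝ) < v - u := by linarith
  constructor
  · by_contra h
    push_neg at h
    obtain ⟨h3, h4⟩ := h
    rw [div_lt_div_iff₀ hc ha] at h3
    rw [div_lt_div_iff₀ hc hb] at h4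
    nlinarith
  · by_contra h
    push_neg at h
    obtain ⟨h3, h4⟩ := h
    rw [div_lt_div_iff₀ ha hc] at h3
    rw [div_lt_div_iff₀ hb hc] at h4
    nlinarith

lemma both_case (g f : ℝ → ℝ) {S T : Set ℝ} (hST : S ⊆ T) (hg : IsControl g f S)
    {u v : ℝ} (hu : u ∈ S) (hv : v ∈ S) (huv : u < v) :
    ∃ p ∈ Set.Icc u v ∩ T, ∃ q ∈ Set.Icc u v ∩ T,
      g p ≤ (f v - f u) / (v - u) ∧ (f v - f u) / (v - u) ≤ g q := by
  obtain ⟨p, ⟨hp1, hp2⟩, q, ⟨hq1, hq2⟩, h⟩ := hg u hu v hv huv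
  exact ⟨p, ⟨hp1, hST hp2⟩, q, ⟨hq1, hST hq2⟩, h⟩

lemma mixed_case (I J : Set ℝ) (hI : I.OrdConnected) (hJ : J.OrdConnected)
    (g f : ℝ → ℝ) (hgI : IsControl g f I) (hgJ : IsControl g f J)
    {u v w : ℝ} (hu : u ∈ I) (hv : v ∈ J) (hw : w ∈ I ∩ J) (huv : u < v) :
    ∃ p ∈ Set.Icc u v ∩ (I ∪ J), ∃ q ∈ Set.Icc u v ∩ (I ∪ J),
      g p ≤ (f v - f u) / (v - u) ∧ (f v - f u) / (v - u) ≤ g q := by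
  rcases le_or_gt w u with hwu | huw
  · -- u ∈ J, both in J
    have huJ : u ∈ J := hJ.out hw.2 hv ⟨hwu, le_of_lt huv⟩
    exact both_case g f Set.subset_union_right hgJ huJ hv huv
  rcases le_or_gt v w with hvw | hwv
  · have hvI : v ∈ I := hI.out hu hw.1 ⟨le_of_lt huv, hvw⟩
    exact both_case g f Set.subset_union_left hgI hu hvI huv
  -- u < w < v
  obtain ⟨p1, ⟨hp11, hp12⟩, q1, ⟨hq11, hq12⟩, hc1⟩ := hgI u hu w hw.1 huw
  obtain ⟨p2, ⟨hp21, hp22⟩, q2, ⟨hq21, hq22⟩, hc2⟩ := hgJ w hw.2 v hv hwv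
  have hsub1 : Set.Icc u w ⊆ Set.Icc u v := Set.Icc_subset_Icc le_rfl (le_of_lt hwv)
  have hsub2 : Set.Icc w v ⊆ Set.Icc u v := Set.Icc_subset_Icc (le_of_lt huw) le_rfl
  obtain ⟨hlo, hhi⟩ := quot_split f huw hwv
  refine ⟨?_, ?_, ?_, ?_, ?_, ?_⟩
  case _ => exact if h : (f w - f u) / (w - u) ≤ (f v - f u) / (v - u) then p1 else p2
  case _ =>
    split
    · exact ⟨hsub1 hp11, Or.inl hp12⟩
    · exact ⟨hsub2 hp21, Or.inr hp22⟩
  case _ => exact if h : (f v - f u) / (v - u) ≤ (f w - f u) / (w - u) then q1 else q2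
  case _ =>
    split
    · exact ⟨hsub1 hq11, Or.inl hq12⟩
    · exact ⟨hsub2 hq21, Or.inr hq22⟩
  case _ =>
    split
    · next h => exact le_trans hc1.1 h
    · next h =>
      rcases hlo with h' | h'
      · exact absurd h' h
      · exact le_trans hc2.1 h'
  case _ =>
    split
    · next h => exact le_trans h hc1.2
    · next h =>
      rcases hhi with h' | h'
      · exact absurd h' h
      · exact le_trans h' hc2.2

theorem control_on_union (I J : Set ℝ) (hI : I.OrdConnected) (hJ : J.OrdConnected)
    (hIJ : (I ∩ J).Nonempty) (hK : (I ∪ J).OrdConnected)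
    (g f : ℝ → ℝ) (hgI : IsControl g f I) (hgJ : IsControl g f J) :
    IsControl g f (I ∪ J) := by
  obtain ⟨w, hw⟩ := hIJ
  intro u hu v hv huv
  rcases hu with hu | hu <;> rcases hv with hv | hv
  · exact both_case g f Set.subset_union_left hgI hu hv huv
  · exact mixed_case I J hI hJ g f hgI hgJ hu hv hw huv
  · have := mixed_case J I hJ hI g f hgJ hgI hu hv ⟨hw.2, hw.1⟩ huv
    rwa [Set.union_comm] at this
  · exact both_case g f Set.subset_union_right hgJ hu hv huv
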